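/- Let A be a finite abelian group and σ : A → A an automorphism with σ ∘ σ = id. Suppose that every element of A killed by 4 is killed by 2 (i.e. A[2] = A[4], where A[m] = {a ∈ A : m·a = 0}). Then the inclusion of {a ∈ A[2] : σ(a) = a} into {a ∈ A : a + σ(a) = 0} induces a group isomorphism from the quotient {a ∈ A[2] : σ(a) = a} / {c + σ(c) : c ∈ A[2]} onto H¹(σ, A) = {a ∈ A : a + σ(a) = 0} / {b − σ(b) : b ∈ A}. -/
import Mathlib


/-- The 2-torsion subgroup A[2] = ker(2•id). -/
abbrev twoTor (A : Type) [AddCommGroup A] : AddSubgroup A :=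
  (2 • AddMonoidHom.id A).ker

/-- The cocycle subgroup Z¹(σ,A) = {a : a + σ(a) = 0} = ker(id + σ). -/
abbrev Zone (A : Type) [AddCommGroup A] (σ : A →+ A) : AddSubgroup A :=
  (AddMonoidHom.id A + σ).ker

/-- The coboundary subgroup B¹(σ,A) = {b - σ(b)} = range(id - σ). -/
abbrev Bone (A : Type) [AddCommGroup A] (σ : A →+ A) : AddSubgroup A :=
  (AddMonoidHom.id A - σ).range

/-- H¹(σ,A) = Z¹(σ,A)/B¹(σ,A). -/
abbrev Hone (A : Type) [AddCommGroup A] (σ : A →+ A) :=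
  Zone A σ ⧸ (Bone A σ).addSubgroupOf (Zone A σ)

/-- The σ-fixed 2-torsion {a ∈ A[2] : σ(a) = a}. -/
abbrev FixTwo (A : Type) [AddCommGroup A] (σ : A →+ A) : AddSubgroup A :=
  twoTor A ⊓ (AddMonoidHom.id A - σ).ker

/-- The subgroup {c + σ(c) : c ∈ A[2]}. -/
abbrev BTwo (A : Type) [AddCommGroup A] (σ : A →+ A) : AddSubgroup A :=
  AddSubgroup.map (AddMonoidHom.id A + σ) (twoTor A)

/-- If A[4] ⊆ A[2] then A[2^k] ⊆ A[2]. -/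
lemma two_pow_smul_eq_zero {A : Type} [AddCommGroup A]
    (h24 : ∀ a : A, 4 • a = 0 → 2 • a = 0) :
    ∀ (k : ℕ) (x : A), 2 ^ k • x = 0 → 2 • x = 0 := by
  intro k
  induction k with
  | zero => intro x hx; rw [pow_zero, one_smul] at hx; rw [hx, smul_zero]
  | succ k ih =>
    intro x hx
    have h1 : 2 ^ k • (2 • x) = 0 := by
      rw [smul_smul, ← pow_succ]; exact hx
    have h2 := ih _ h1
    rw [smul_smul] at h2
    exact h24 x (by rw [show (4 : ℕ) = 2 * 2 from rfl]; exact h2)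

/-- For a finite abelian group A with involution σ and A[2] = A[4], the
inclusion {a ∈ A[2] : σ(a) = a} ⊆ Z¹(σ,A) induces a group isomorphism
{a ∈ A[2] : σ(a) = a}/{c + σ(c) : c ∈ A[2]} ≅ H¹(σ,A). -/
theorem stmt10 (A : Type) [AddCommGroup A] [Finite A]
    (σ : A →+ A) (hσ : ∀ a, σ (σ a) = a)
    (h24 : ∀ a : A, 4 • a = 0 → 2 • a = 0) :
    ∃ e : (FixTwo A σ ⧸ (BTwo A σ).addSubgroupOf (FixTwo A σ)) ≃+ Hone A σ,
      ∀ (a : A) (h2 : a ∈ FixTwo A σ) (hz : a ∈ Zone A σ),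
        e (QuotientAddGroup.mk ⟨a, h2⟩) = QuotientAddGroup.mk ⟨a, hz⟩ := by
  -- membership descriptions
  have mem2 : ∀ a : A, a ∈ twoTor A ↔ 2 • a = 0 := by
    intro a; simp [AddMonoidHom.mem_ker]
  have memFix : ∀ a : A, a ∈ FixTwo A σ ↔ 2 • a = 0 ∧ σ a = a := by
    intro a
    simp only [AddSubgroup.mem_inf, mem2, AddMonoidHom.mem_ker,
      AddMonoidHom.sub_apply, AddMonoidHom.id_apply, sub_eq_zero]
    exact and_congr Iff.rfl eq_comm
  have memZ : ∀ a : A, a ∈ Zone A σ ↔ a + σ a = 0 := by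
    intro a
    simp [AddMonoidHom.mem_ker]
  have memB : ∀ a : A, a ∈ Bone A σ ↔ ∃ b : A, b - σ b = a := by
    intro a
    simp [AddMonoidHom.mem_range]
  have memBT : ∀ a : A, a ∈ BTwo A σ ↔ ∃ c : A, 2 • c = 0 ∧ c + σ c = a := by
    intro a
    simp [AddSubgroup.mem_map, mem2]
  -- global structure constants
  set n := Nat.card A with hn_def
  have hn : n ≠ 0 := Nat.card_pos.ne'
  set k := n.factorization 2 with hk_def
  set m := n / 2 ^ k with hm_def
  have hnm : 2 ^ k * m = n := Nat.ordProj_mul_ordCompl_eq_self n 2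
  have hmodd : ¬ (2 ∣ m) := Nat.not_dvd_ordCompl Nat.prime_two hn
  have hcop2m : Nat.Coprime 2 m := Nat.coprime_ordCompl Nat.prime_two hn
  have hna : ∀ a : A, n • a = 0 := fun a => card_nsmul_eq_zero'
  -- odd smul of a 2-torsion element
  have hodd_smul : ∀ a : A, 2 • a = 0 → m • a = a := by
    intro a ha
    obtain ⟨q, hq⟩ : ∃ q, m = 2 * q + 1 := by
      refine ⟨m / 2, ?_⟩
      omega
    rw [hq, add_smul, one_smul, mul_comm, mul_smul, ha, smul_zero, zero_add]
  -- σ is 2-torsion preserving and commutes with smul (from AddMonoidHom)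
  -- FixTwo ≤ Zone
  have hle : FixTwo A σ ≤ Zone A σ := by
    intro a ha
    rw [memFix] at ha
    rw [memZ, ha.2, ← two_smul ℕ a, ha.1]
  -- the map
  let ι : FixTwo A σ →+ Zone A σ := AddSubgroup.inclusion hle
  let φ : FixTwo A σ →+ Hone A σ :=
    (QuotientAddGroup.mk' ((Bone A σ).addSubgroupOf (Zone A σ))).comp ι
  -- BTwo elements (fixed 2-torsion) are coboundaries
  have hBTB : ∀ a : A, a ∈ BTwo A σ → a ∈ Bone A σ := by
    intro a ha
    rw [memBT] at ha
    obtain ⟨c, hc2, hc⟩ := ha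
    rw [memB]
    refine ⟨c, ?_⟩
    have hσc2 : 2 • σ c = 0 := by rw [← map_nsmul, hc2, map_zero]
    have : σ c = -σ c := by
      rw [eq_neg_iff_add_eq_zero, ← two_smul ℕ (σ c)]; exact hσc2
    rw [← hc, sub_eq_add_neg, ← this]
  have hker : (BTwo A σ).addSubgroupOf (FixTwo A σ) ≤ φ.ker := by
    intro x hx
    rw [AddSubgroup.mem_addSubgroupOf] at hx
    rw [AddMonoidHom.mem_ker]
    show QuotientAddGroup.mk (ι x) = 0
    rw [QuotientAddGroup.eq_zero_iff, AddSubgroup.mem_addSubgroupOf]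
    exact hBTB _ hx
  let f := QuotientAddGroup.lift _ φ hker
  -- injectivity
  have hinj : Function.Injective f := by
    rw [injective_iff_map_eq_zero]
    intro x hx
    induction x using QuotientAddGroup.induction_on with
    | H x =>
      obtain ⟨a, ha⟩ := x
      have hfa := (memFix a).mp ha
      have h0 : (QuotientAddGroup.mk (ι ⟨a, ha⟩) : Hone A σ) = 0 := hx
      rw [QuotientAddGroup.eq_zero_iff, AddSubgroup.mem_addSubgroupOf] at h0
      rw [memB] at h0
      obtain ⟨b, hb⟩ := h0
      -- a = b - σ b ; pass to the 2-primary part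
      rw [QuotientAddGroup.eq_zero_iff, AddSubgroup.mem_addSubgroupOf, memBT]
      set b' := m • b with hb'_def
      have hb'tor : 2 ^ k • b' = 0 := by
        rw [hb'_def, smul_smul, hnm, hna]
      have hb'2 : 2 • b' = 0 := two_pow_smul_eq_zero h24 k b' hb'tor
      have hσb'2 : 2 • σ b' = 0 := by rw [← map_nsmul, hb'2, map_zero]
      have key : b' - σ b' = a := by
        have : m • (b - σ b) = m • a := by rw [hb]; rfl
        rw [smul_sub, ← map_nsmul, hodd_smul a hfa.1] at this
        exact this
      refine ⟨b', hb'2, ?_⟩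
      have : σ b' = -σ b' := by
        rw [eq_neg_iff_add_eq_zero, ← two_smul ℕ (σ b')]; exact hσb'2
      rw [show b' + σ b' = b' - σ b' by rw [sub_eq_add_neg, ← this], key]
  -- surjectivity
  have hsurj : Function.Surjective f := by
    intro y
    induction y using QuotientAddGroup.induction_on with
    | H z =>
      obtain ⟨a, haz⟩ := z
      have haz' : a + σ a = 0 := (memZ a).mp haz
      have hσa : σ a = -a := by linear_combination (norm := abel) haz'
      -- Bezout: split a into 2-primary and odd parts
      have hcop : IsCoprime ((2 : ℤ) ^ k) (m : ℤ) := by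
        rw [show ((2 : ℤ) ^ k) = ((2 ^ k : ℕ) : ℤ) by push_cast; ring]
        rw [Nat.isCoprime_iff_coprime]
        exact hcop2m.pow_left k
      obtain ⟨u, v, huv⟩ := hcop
      set x := (v * (m : ℤ)) • a with hx_def
      set y := (u * (2 : ℤ) ^ k) • a with hy_def
      have hxy : x + y = a := by
        rw [hx_def, hy_def, ← add_smul]
        rw [show v * (m : ℤ) + u * 2 ^ k = 1 by linarith [huv]]
        rw [one_smul]
      -- x is fixed 2-torsion
      have hx2k : (2 : ℤ) ^ k • x = 0 := by
        rw [hx_def, smul_smul]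
        rw [show (2 : ℤ) ^ k * (v * (m : ℤ)) = v * ((2 ^ k * m : ℕ) : ℤ) by push_cast; ring]
        rw [hnm, ← smul_smul, natCast_zsmul, hna, smul_zero]
      have hx2 : 2 • x = 0 := by
        have : (2 : ℕ) ^ k • x = 0 := by
          rw [← natCast_zsmul]; push_cast; exact hx2k
        exact two_pow_smul_eq_zero h24 k x this
      have hσx : σ x = -x := by
        rw [hx_def, map_zsmul, hσa, smul_neg]
      have hxneg : -x = x := by
        rw [neg_eq_iff_add_eq_zero, ← two_smul ℕ x]; exact hx2
      have hxFix : x ∈ FixTwo A σ := (memFix x).mpr ⟨hx2, by rw [hσx, hxneg]⟩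
      -- y is a coboundary
      have hym : (m : ℤ) • y = 0 := by
        rw [hy_def, smul_smul]
        rw [show (m : ℤ) * (u * 2 ^ k) = u * ((2 ^ k * m : ℕ) : ℤ) by push_cast; ring]
        rw [hnm, ← smul_smul, natCast_zsmul, hna, smul_zero]
      have hσy : σ y = -y := by
        rw [hy_def, map_zsmul, hσa, smul_neg]
      have hyB : y ∈ Bone A σ := by
        have hc : IsCoprime (2 : ℤ) (m : ℤ) := by
          rw [show (2 : ℤ) = ((2 : ℕ) : ℤ) by norm_num, Nat.isCoprime_iff_coprime]
          exact hcop2m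
        obtain ⟨w, t, hwt⟩ := hc
        rw [memB]
        refine ⟨w • y, ?_⟩
        rw [map_zsmul, hσy, smul_neg, sub_neg_eq_add, ← two_zsmul, smul_smul]
        calc (2 * w) • y = (w * 2 + t * (m : ℤ)) • y - (t * (m : ℤ)) • y := by
              rw [add_smul, add_sub_cancel_right, mul_comm]
          _ = y := by
              rw [hwt, one_smul, mul_smul, hym, smul_zero, sub_zero]
      refine ⟨QuotientAddGroup.mk ⟨x, hxFix⟩, ?_⟩
      show QuotientAddGroup.mk (ι ⟨x, hxFix⟩) = QuotientAddGroup.mk (⟨a, haz⟩ : Zone A σ)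
      rw [QuotientAddGroup.eq, AddSubgroup.mem_addSubgroupOf]
      show -(x : A) + a ∈ Bone A σ
      rw [show -x + a = y by rw [← hxy]; abel]
      exact hyB
  exact ⟨AddEquiv.ofBijective f ⟨hinj, hsurj⟩, fun a h2 hz => rfl⟩
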